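/- Fix p ∈ [1,∞). Let (X,d,μ) be a metric measure space of bounded geometry and let Y ⊆ X be a discretization of X with covering radius R. Fix T ≥ R. Define P_T f(x) = μ(B(x,T))^{-1} ∫_{B(x,T)} f dμ for locally μ-integrable f : X → ℝ; set S_T(x) = Σ_{z ∈ Y} 1_{B(z,T)}(x) and, for g : Y → ℝ, φ_T g(x) = Σ_{z ∈ Y} g(z)·1_{B(z,T)}(x)/S_T(x). Then there exists a constant C > 0 (depending only on p, T and the bounded-geometry data) such that for every locally μ-integrable f : X → ℝ one has ∫_X |f(x) − φ_T((P_T f)|_Y)(x)|^p dμ(x) ≤ C · ∫∫_{{(x,x') ∈ X×X : d(x,x') ≤ 2T}} |f(x) − f(x')|^p dμ(x) dμ(x'). -/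

import Mathlib

open MeasureTheory
open scoped ENNReal

/-- The averaging operator `P_T f (x) = μ(B(x,T))⁻¹ ∫_{B(x,T)} f dμ`. -/
noncomputable def PT {X : Type*} [MetricSpace X] [MeasurableSpace X]
    (μ : Measure X) (T : ℝ) (f : X → ℝ) (x : X) : ℝ :=
  (μ (Metric.closedBall x T)).toReal⁻¹ * ∫ y in Metric.closedBall x T, f y ∂μ

/-- `S_T(x) = Σ_{z ∈ Y} 1_{B(z,T)}(x)`, the number of points of `Y` at distance `≤ T`
from `x`. -/
noncomputable def STcount {X : Type*} [MetricSpace X] (Y : Set X) (T : ℝ) (x : X) : ℕ :=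
  Set.ncard {y ∈ Y | dist x y ≤ T}

/-- `φ_T g (x) = Σ_{z ∈ Y} g(z)·1_{B(z,T)}(x) / S_T(x)`, the extension operator from a
discretization `Y` back to `X`. -/
noncomputable def phiT {X : Type*} [MetricSpace X] (Y : Set X) (T : ℝ) (g : X → ℝ)
    (x : X) : ℝ :=
  (∑ᶠ y ∈ {y ∈ Y | dist x y ≤ T}, g y) / (STcount Y T x : ℝ)

/-- An `ε`-separated set intersected with a ball is finite, under bounded geometry. -/
lemma sep_inter_ball_finite
    {X : Type*} [MetricSpace X] [MeasurableSpace X] [BorelSpace X]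
    (μ : Measure X) (v V : ℝ → ℝ)
    (hv : ∀ r > 0, 0 < v r)
    (hgeom : ∀ (x : X) (r : ℝ), 0 < r →
      ENNReal.ofReal (v r) ≤ μ (Metric.closedBall x r) ∧
        μ (Metric.closedBall x r) ≤ ENNReal.ofReal (V r))
    (Z : Set X) (ε : ℝ) (hε : 0 < ε)
    (hsep : ∀ y ∈ Z, ∀ y' ∈ Z, y ≠ y' → ε ≤ dist y y')
    (x : X) (T : ℝ) (hT0 : 0 < T) :
    {y ∈ Z | dist x y ≤ T}.Finite := by
  by_contra hinf
  set S := {y ∈ Z | dist x y ≤ T} with hS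
  have hinf' : S.Infinite := hinf
  let e := hinf'.natEmbedding
  let u : ℕ → X := fun n => (e n : X)
  have hu : ∀ n, u n ∈ S := fun n => (e n).2
  have hinj : Function.Injective u := fun m n h => by
    have := Subtype.coe_injective h
    exact e.injective this
  have hdisj : Pairwise (Function.onFun Disjoint
      fun n => Metric.closedBall (u n) (ε / 4)) := by
    intro m n hmn
    rw [Function.onFun, Set.disjoint_left]
    intro z hzm hzn
    have h1 : ε ≤ dist (u m) (u n) :=
      hsep _ (hu m).1 _ (hu n).1 (fun h => hmn (hinj h))
    have h2 : dist (u m) (u n) ≤ dist (u m) z + dist z (u n) := dist_triangle _ _ _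
    have h3 : dist (u m) z ≤ ε / 4 := by rw [dist_comm]; exact hzm
    have h4 : dist z (u n) ≤ ε / 4 := hzn
    linarith
  have hmeas : ∀ n, MeasurableSet (Metric.closedBall (u n) (ε / 4)) :=
    fun _ => Metric.isClosed_closedBall.measurableSet
  have hsum : μ (⋃ n, Metric.closedBall (u n) (ε / 4))
      = ∑' n, μ (Metric.closedBall (u n) (ε / 4)) :=
    measure_iUnion hdisj hmeas
  have hlow : (⊤ : ℝ≥0∞) ≤ μ (⋃ n, Metric.closedBall (u n) (ε / 4)) := by
    rw [hsum]
    have h1 : ∀ n, ENNReal.ofReal (v (ε / 4)) ≤ μ (Metric.closedBall (u n) (ε / 4)) :=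
      fun n => (hgeom (u n) (ε / 4) (by linarith)).1
    calc (⊤ : ℝ≥0∞) = ∑' _ : ℕ, ENNReal.ofReal (v (ε / 4)) := by
          rw [ENNReal.tsum_const_eq_top_of_ne_zero]
          simp only [ne_eq, ENNReal.ofReal_eq_zero, not_le]
          exact hv _ (by linarith)
      _ ≤ _ := ENNReal.tsum_le_tsum h1
  have hup : μ (⋃ n, Metric.closedBall (u n) (ε / 4)) ≤ ENNReal.ofReal (V (T + ε / 4)) := by
    refine le_trans (measure_mono ?_) (hgeom x (T + ε / 4) (by linarith)).2
    intro z hz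
    simp only [Set.mem_iUnion] at hz
    obtain ⟨n, hn⟩ := hz
    have h1 : dist z (u n) ≤ ε / 4 := hn
    have h2 : dist x (u n) ≤ T := (hu n).2
    rw [Metric.mem_closedBall]
    calc dist z x ≤ dist z (u n) + dist (u n) x := dist_triangle _ _ _
      _ ≤ ε / 4 + T := by rw [dist_comm (u n) x]; linarith
      _ = T + ε / 4 := by ring
  exact (lt_irrefl (⊤ : ℝ≥0∞)) (lt_of_le_of_lt (hlow.trans hup) ENNReal.ofReal_lt_top)

/-- Bounded geometry implies the space is second countable. -/
lemma secondCountable_of_geom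
    {X : Type*} [MetricSpace X] [MeasurableSpace X] [BorelSpace X]
    (μ : Measure X) (v V : ℝ → ℝ)
    (hv : ∀ r > 0, 0 < v r)
    (hgeom : ∀ (x : X) (r : ℝ), 0 < r →
      ENNReal.ofReal (v r) ≤ μ (Metric.closedBall x r) ∧
        μ (Metric.closedBall x r) ≤ ENNReal.ofReal (V r)) :
    SecondCountableTopology X := by
  rcases isEmpty_or_nonempty X with hX | hX
  · exact Metric.secondCountable_of_almost_dense_set fun ε hε =>
      ⟨∅, Set.countable_empty, fun x => (IsEmpty.false x).elim⟩
  obtain ⟨x₀⟩ := hX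
  apply Metric.secondCountable_of_almost_dense_set
  intro ε hε
  set P : Set (Set X) := {s | ∀ a ∈ s, ∀ b ∈ s, a ≠ b → ε ≤ dist a b} with hP
  obtain ⟨m, hm⟩ := zorn_subset P (by
    intro c hc hchain
    refine ⟨⋃₀ c, ?_, fun s hs => Set.subset_sUnion_of_mem hs⟩
    intro a ha b hb hab
    obtain ⟨s, hs, has⟩ := ha
    obtain ⟨t, ht, hbt⟩ := hb
    rcases hchain.total hs ht with h | h
    · exact hc ht _ (h has) _ hbt hab
    · exact hc hs _ has _ (h hbt) hab)
  refine ⟨m, ?_, ?_⟩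
  · -- countable
    have hsub : m ⊆ ⋃ n : ℕ, {y ∈ m | dist x₀ y ≤ (n : ℝ) + 1} := by
      intro z hz
      simp only [Set.mem_iUnion, Set.mem_setOf_eq]
      exact ⟨⌈dist x₀ z⌉₊, hz, le_trans (Nat.le_ceil _) (by linarith)⟩
    refine Set.Countable.mono hsub (Set.countable_iUnion fun n => ?_)
    exact (sep_inter_ball_finite μ v V hv hgeom m ε hε hm.1 x₀ ((n : ℝ) + 1)
      (by positivity)).countable
  · -- ε-dense
    intro x
    by_contra hx
    push_neg at hx
    have hins : insert x m ∈ P := by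
      intro a ha b hb hab
      rcases ha with rfl | ha
      · rcases hb with rfl | hb
        · exact absurd rfl hab
        · exact le_of_lt (hx b hb)
      · rcases hb with rfl | hb
        · rw [dist_comm]; exact le_of_lt (hx a ha)
        · exact hm.1 a ha b hb hab
    have : insert x m ⊆ m := hm.2 hins (Set.subset_insert x m)
    have hxmem : x ∈ m := this (Set.mem_insert x m)
    have := hx x hxmem
    simp [dist_self] at this
    linarith

/-- Pointwise bound: `|f x - φ_T(P_T f) x|^p ≤ v(T)⁻¹ ∫_{B(x,2T)} |f x - f x'|^p dμ(x')`. -/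
lemma pointwise_bound
    {X : Type*} [MetricSpace X] [MeasurableSpace X] [BorelSpace X]
    (μ : Measure X) (v V : ℝ → ℝ)
    (hv : ∀ r > 0, 0 < v r)
    (hgeom : ∀ (x : X) (r : ℝ), 0 < r →
      ENNReal.ofReal (v r) ≤ μ (Metric.closedBall x r) ∧
        μ (Metric.closedBall x r) ≤ ENNReal.ofReal (V r))
    (Y : Set X) (R : ℝ) (hR : 0 < R)
    (hsep : ∀ y ∈ Y, ∀ y' ∈ Y, y ≠ y' → 1 ≤ dist y y')
    (hcov : ∀ x : X, ∃ y ∈ Y, dist x y ≤ R)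
    (p : ℝ) (hp : 1 ≤ p) (T : ℝ) (hT : R ≤ T)
    (f : X → ℝ) (hf : LocallyIntegrable f μ) (x : X) :
    ENNReal.ofReal (|f x - phiT Y T (PT μ T f) x| ^ p) ≤
      (ENNReal.ofReal (v T))⁻¹ *
        ∫⁻ x' in Metric.closedBall x (2 * T), ENNReal.ofReal (|f x - f x'| ^ p) ∂μ := by
  haveI : SecondCountableTopology X := secondCountable_of_geom μ v V hv hgeom
  have hT0 : 0 < T := lt_of_lt_of_le hR hT
  have hp0 : (0 : ℝ) < p := lt_of_lt_of_le one_pos hp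
  set A := ∫⁻ x' in Metric.closedBall x (2 * T), ENNReal.ofReal (|f x - f x'| ^ p) ∂μ with hA
  by_cases hAtop : A = ⊤
  · rw [hAtop, ENNReal.mul_top (by simp [ENNReal.inv_ne_zero])]
    exact le_top
  set S := {y ∈ Y | dist x y ≤ T} with hS
  have hSfin : S.Finite := sep_inter_ball_finite μ v V hv hgeom Y 1 one_pos hsep x T hT0
  set Fs := hSfin.toFinset with hFs
  have hFsne : Fs.Nonempty := by
    obtain ⟨y, hy, hyd⟩ := hcov x
    exact ⟨y, by rw [hFs, Set.Finite.mem_toFinset]; exact ⟨hy, le_trans hyd hT⟩⟩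
  set N := Fs.card with hNdef
  have hN0 : 0 < N := Finset.card_pos.2 hFsne
  have hNR : (0 : ℝ) < (N : ℝ) := by exact_mod_cast hN0
  -- per-point bound
  have key : ∀ y ∈ Fs, ENNReal.ofReal (|f x - PT μ T f y| ^ p)
      ≤ (ENNReal.ofReal (v T))⁻¹ * A := by
    intro y hy
    have hyS : y ∈ S := (Set.Finite.mem_toFinset hSfin).1 hy
    set B := Metric.closedBall y T with hB
    have hsub : B ⊆ Metric.closedBall x (2 * T) := by
      intro z hz
      rw [Metric.mem_closedBall] at *
      calc dist z x ≤ dist z y + dist y x := dist_triangle _ _ _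
        _ ≤ T + T := add_le_add hz (by rw [dist_comm]; exact hyS.2)
        _ = 2 * T := by ring
    have hμlb : ENNReal.ofReal (v T) ≤ μ B := (hgeom y T hT0).1
    have hμub : μ B ≤ ENNReal.ofReal (V T) := (hgeom y T hT0).2
    have hμ0 : μ B ≠ 0 := by
      intro h
      rw [h, le_zero_iff, ENNReal.ofReal_eq_zero] at hμlb
      exact absurd hμlb (not_le.2 (hv T hT0))
    have hμtop : μ B ≠ ⊤ := (lt_of_le_of_lt hμub ENNReal.ofReal_lt_top).ne
    have hμtR : 0 < (μ B).toReal := ENNReal.toReal_pos hμ0 hμtop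
    set Ay := ∫⁻ x' in B, ENNReal.ofReal (|f x - f x'| ^ p) ∂μ with hAy
    have hAyA : Ay ≤ A := lintegral_mono_set hsub
    have hAytop : Ay ≠ ⊤ := (lt_of_le_of_lt hAyA (lt_top_iff_ne_top.2 hAtop)).ne
    set g : X → ℝ := fun x' => f x - f x' with hg
    have hgm : AEStronglyMeasurable g (μ.restrict B) :=
      aestronglyMeasurable_const.sub hf.aestronglyMeasurable.restrict
    have hptw : ∀ x' : X, ENNReal.ofReal (|g x'| ^ p) = (‖g x'‖₊ : ℝ≥0∞) ^ p := by
      intro x'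
      rw [← ENNReal.ofReal_rpow_of_nonneg (abs_nonneg _) hp0.le, ← Real.norm_eq_abs,
        ofReal_norm, enorm_eq_nnnorm]
    have hAy' : ∫⁻ x' in B, (‖g x'‖₊ : ℝ≥0∞) ^ p ∂μ = Ay := by
      rw [hAy]; exact lintegral_congr fun x' => (hptw x').symm
    have hq0 : ENNReal.ofReal p ≠ 0 := by
      simp only [ne_eq, ENNReal.ofReal_eq_zero, not_le]; exact hp0
    have hqt : ENNReal.ofReal p ≠ ⊤ := ENNReal.ofReal_ne_top
    have heLp : eLpNorm g (ENNReal.ofReal p) (μ.restrict B) = Ay ^ (1 / p) := by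
      rw [eLpNorm_eq_lintegral_rpow_enorm_toReal hq0 hqt, ENNReal.toReal_ofReal hp0.le]
      simp only [enorm_eq_nnnorm]
      rw [hAy', one_div]
    haveI : IsFiniteMeasure (μ.restrict B) :=
      ⟨by rw [Measure.restrict_apply_univ]; exact lt_of_le_of_lt hμub ENNReal.ofReal_lt_top⟩
    have hmem : MemLp g (ENNReal.ofReal p) (μ.restrict B) :=
      ⟨hgm, by rw [heLp]; exact ENNReal.rpow_lt_top_of_nonneg (by positivity) hAytop⟩
    have hint : Integrable g (μ.restrict B) := hmem.integrable (ENNReal.one_le_ofReal.2 hp)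
    have hfint : Integrable f (μ.restrict B) := by
      have h2 := (integrable_const (f x)).sub hint
      have h3 : ((fun _ => f x) - g) = f := by
        funext z; simp [hg]
      rwa [h3] at h2
    have hPT : f x - PT μ T f y = (μ B).toReal⁻¹ * ∫ x' in B, g x' ∂μ := by
      have h3 : ∫ x' in B, g x' ∂μ = (μ B).toReal * f x - ∫ x' in B, f x' ∂μ := by
        rw [hg]
        rw [integral_sub (integrable_const _) hfint, setIntegral_const, smul_eq_mul]
        rfl
      rw [PT, ← hB, h3]
      field_simp
    have habs : |f x - PT μ T f y| ≤ (μ B).toReal⁻¹ * ∫ x' in B, |g x'| ∂μ := by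
      rw [hPT, abs_mul, abs_of_nonneg (inv_nonneg.2 ENNReal.toReal_nonneg)]
      refine mul_le_mul_of_nonneg_left ?_ (inv_nonneg.2 ENNReal.toReal_nonneg)
      simpa [Real.norm_eq_abs] using norm_integral_le_integral_norm (μ := μ.restrict B) g
    have hE1 : ENNReal.ofReal (∫ x' in B, |g x'| ∂μ) = ∫⁻ x' in B, (‖g x'‖₊ : ℝ≥0∞) ∂μ := by
      have h5 := ofReal_integral_norm_eq_lintegral_enorm hint
      simpa [Real.norm_eq_abs, enorm_eq_nnnorm] using h5
    have hE2 : ∫⁻ x' in B, (‖g x'‖₊ : ℝ≥0∞) ∂μ ≤ Ay ^ (1 / p) * μ B ^ (1 - 1 / p) := by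
      have h4 := eLpNorm_le_eLpNorm_mul_rpow_measure_univ (p := 1) (q := ENNReal.ofReal p)
        (ENNReal.one_le_ofReal.2 hp) hgm
      rw [eLpNorm_one_eq_lintegral_enorm, heLp, Measure.restrict_apply_univ] at h4
      simpa [ENNReal.toReal_one, enorm_eq_nnnorm, ENNReal.toReal_ofReal hp0.le] using h4
    calc ENNReal.ofReal (|f x - PT μ T f y| ^ p)
        = ENNReal.ofReal |f x - PT μ T f y| ^ p :=
          (ENNReal.ofReal_rpow_of_nonneg (abs_nonneg _) hp0.le).symm
      _ ≤ ENNReal.ofReal ((μ B).toReal⁻¹ * ∫ x' in B, |g x'| ∂μ) ^ p :=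
          ENNReal.rpow_le_rpow (ENNReal.ofReal_le_ofReal habs) hp0.le
      _ = ((μ B)⁻¹ * ∫⁻ x' in B, (‖g x'‖₊ : ℝ≥0∞) ∂μ) ^ p := by
          rw [ENNReal.ofReal_mul (inv_nonneg.2 ENNReal.toReal_nonneg), hE1,
            ENNReal.ofReal_inv_of_pos hμtR, ENNReal.ofReal_toReal hμtop]
      _ ≤ ((μ B)⁻¹ * (Ay ^ (1 / p) * μ B ^ (1 - 1 / p))) ^ p := by
          gcongr
      _ = (μ B)⁻¹ * Ay := by
          rw [ENNReal.mul_rpow_of_nonneg _ _ hp0.le, ENNReal.mul_rpow_of_nonneg _ _ hp0.le,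
            ENNReal.inv_rpow, ← ENNReal.rpow_mul, ← ENNReal.rpow_mul,
            one_div_mul_cancel hp0.ne', ENNReal.rpow_one]
          have hpe : -p + (1 - 1 / p) * p = -1 := by
            field_simp
            ring
          rw [mul_comm (Ay : ℝ≥0∞) _, ← mul_assoc, ← ENNReal.rpow_neg,
            ← ENNReal.rpow_add _ _ hμ0 hμtop, hpe, ENNReal.rpow_neg_one]
      _ ≤ (ENNReal.ofReal (v T))⁻¹ * A := by
          gcongr
  -- averaging over the points of `Fs`
  have hphi : phiT Y T (PT μ T f) x = (∑ y ∈ Fs, PT μ T f y) / (N : ℝ) := by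
    rw [phiT, STcount]
    rw [finsum_mem_eq_finite_toFinset_sum _ hSfin, Set.ncard_eq_toFinset_card _ hSfin]
  have hsum1 : f x - phiT Y T (PT μ T f) x
      = (∑ y ∈ Fs, (f x - PT μ T f y)) / (N : ℝ) := by
    rw [hphi, Finset.sum_sub_distrib, Finset.sum_const, nsmul_eq_mul, sub_div]
    field_simp
    rfl
  have habs2 : |f x - phiT Y T (PT μ T f) x|
      ≤ (∑ y ∈ Fs, |f x - PT μ T f y|) / (N : ℝ) := by
    rw [hsum1, abs_div, abs_of_pos hNR]
    gcongr
    exact Finset.abs_sum_le_sum_abs _ _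
  have hw : ∑ _y ∈ Fs, ((N : ℝ≥0∞))⁻¹ = 1 := by
    rw [Finset.sum_const, nsmul_eq_mul]
    exact ENNReal.mul_inv_cancel (by exact_mod_cast hN0.ne') (ENNReal.natCast_ne_top N)
  calc ENNReal.ofReal (|f x - phiT Y T (PT μ T f) x| ^ p)
      = ENNReal.ofReal |f x - phiT Y T (PT μ T f) x| ^ p :=
        (ENNReal.ofReal_rpow_of_nonneg (abs_nonneg _) hp0.le).symm
    _ ≤ ENNReal.ofReal ((∑ y ∈ Fs, |f x - PT μ T f y|) / (N : ℝ)) ^ p :=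
        ENNReal.rpow_le_rpow (ENNReal.ofReal_le_ofReal habs2) hp0.le
    _ = (∑ y ∈ Fs, (N : ℝ≥0∞)⁻¹ * ENNReal.ofReal |f x - PT μ T f y|) ^ p := by
        rw [div_eq_inv_mul, ENNReal.ofReal_mul (by positivity),
          ENNReal.ofReal_sum_of_nonneg (fun i _ => abs_nonneg _),
          ENNReal.ofReal_inv_of_pos hNR, ENNReal.ofReal_natCast, Finset.mul_sum]
    _ ≤ ∑ y ∈ Fs, (N : ℝ≥0∞)⁻¹ * ENNReal.ofReal |f x - PT μ T f y| ^ p :=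
        ENNReal.rpow_arith_mean_le_arith_mean_rpow Fs _ _ hw hp
    _ = ∑ y ∈ Fs, (N : ℝ≥0∞)⁻¹ * ENNReal.ofReal (|f x - PT μ T f y| ^ p) := by
        refine Finset.sum_congr rfl fun y _ => ?_
        rw [ENNReal.ofReal_rpow_of_nonneg (abs_nonneg _) hp0.le]
    _ ≤ ∑ _y ∈ Fs, (N : ℝ≥0∞)⁻¹ * ((ENNReal.ofReal (v T))⁻¹ * A) :=
        Finset.sum_le_sum fun y hy => mul_le_mul_right (key y hy) _
    _ = (ENNReal.ofReal (v T))⁻¹ * A := by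
        rw [Finset.sum_const, nsmul_eq_mul, ← mul_assoc,
          ENNReal.mul_inv_cancel (by exact_mod_cast hN0.ne') (ENNReal.natCast_ne_top N),
          one_mul]

/-- `φ_T ∘ P_T` is close to the identity: for a metric measure space `(X,d,μ)` of bounded
geometry, a discretization `Y ⊆ X` with covering radius `R`, and `T ≥ R`, there is
`C > 0` such that for every locally integrable `f`,
`∫_X |f − φ_T((P_T f)|_Y)|^p dμ ≤ C ∫∫_{d(x,x') ≤ 2T} |f(x) − f(x')|^p dμ dμ`. -/
theorem dist_phiT_PT_le_energy
    {X : Type*} [MetricSpace X] [MeasurableSpace X] [BorelSpace X]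
    (μ : Measure X) (v V : ℝ → ℝ)
    (hv : ∀ r > 0, 0 < v r) (hvmono : MonotoneOn v (Set.Ioi 0))
    (hV : ∀ r > 0, 0 < V r) (hVmono : MonotoneOn V (Set.Ioi 0))
    (hgeom : ∀ (x : X) (r : ℝ), 0 < r →
      ENNReal.ofReal (v r) ≤ μ (Metric.closedBall x r) ∧
        μ (Metric.closedBall x r) ≤ ENNReal.ofReal (V r))
    (Y : Set X) (R : ℝ) (hR : 0 < R)
    (hsep : ∀ y ∈ Y, ∀ y' ∈ Y, y ≠ y' → 1 ≤ dist y y')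
    (hcov : ∀ x : X, ∃ y ∈ Y, dist x y ≤ R)
    (p : ℝ) (hp : 1 ≤ p) (T : ℝ) (hT : R ≤ T) :
    ∃ C : ℝ, 0 < C ∧ ∀ f : X → ℝ, LocallyIntegrable f μ →
      (∫⁻ x, ENNReal.ofReal (|f x - phiT Y T (PT μ T f) x| ^ p) ∂μ)
        ≤ ENNReal.ofReal C *
          ∫⁻ q in {q : X × X | dist q.1 q.2 ≤ 2 * T},
            ENNReal.ofReal (|f q.1 - f q.2| ^ p) ∂(μ.prod μ) := by
  have hT0 : 0 < T := lt_of_lt_of_le hR hT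
  refine ⟨(v T)⁻¹, inv_pos.2 (hv T hT0), ?_⟩
  intro f hf
  rcases isEmpty_or_nonempty X with hX | hX
  · rw [lintegral_of_isEmpty]; exact zero_le
  haveI : SecondCountableTopology X := secondCountable_of_geom μ v V hv hgeom
  obtain ⟨x₀⟩ := hX
  haveI : SigmaFinite μ := by
    apply Measure.sigmaFinite_of_countable
      (S := Set.range fun n : ℕ => Metric.closedBall x₀ ((n : ℝ) + 1))
      (Set.countable_range _)
    · rintro s ⟨n, rfl⟩
      exact lt_of_le_of_lt (hgeom x₀ _ (by positivity)).2 ENNReal.ofReal_lt_top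
    · rw [Set.sUnion_range]
      refine Set.eq_univ_of_forall fun z => ?_
      simp only [Set.mem_iUnion, Metric.mem_closedBall]
      exact ⟨⌈dist z x₀⌉₊, le_trans (Nat.le_ceil _) (by linarith)⟩
  set s : Set (X × X) := {q : X × X | dist q.1 q.2 ≤ 2 * T} with hs
  have hsmeas : MeasurableSet s := by
    have hcl : IsClosed s := isClosed_le (continuous_fst.dist continuous_snd) continuous_const
    exact hcl.measurableSet
  set F : X × X → ℝ≥0∞ := fun q => ENNReal.ofReal (|f q.1 - f q.2| ^ p) with hF
  have hFmeas : AEMeasurable F (μ.prod μ) := by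
    have h1 : AEStronglyMeasurable (fun q : X × X => f q.1 - f q.2) (μ.prod μ) :=
      hf.aestronglyMeasurable.comp_fst.sub hf.aestronglyMeasurable.comp_snd
    have hm : Measurable fun t : ℝ => ENNReal.ofReal (|t| ^ p) :=
      ENNReal.measurable_ofReal.comp (continuous_abs.measurable.pow measurable_const)
    exact hm.comp_aemeasurable h1.aemeasurable
  have hRHS : ∫⁻ q in s, F q ∂(μ.prod μ)
      = ∫⁻ x, ∫⁻ x', s.indicator F (x, x') ∂μ ∂μ := by
    rw [← lintegral_indicator hsmeas, lintegral_prod _ (hFmeas.indicator hsmeas)]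
  have hinner : ∀ x : X, (∫⁻ x', s.indicator F (x, x') ∂μ)
      = ∫⁻ x' in Metric.closedBall x (2 * T), ENNReal.ofReal (|f x - f x'| ^ p) ∂μ := by
    intro x
    rw [← lintegral_indicator Metric.isClosed_closedBall.measurableSet]
    refine lintegral_congr fun x' => ?_
    by_cases hd : dist x x' ≤ 2 * T
    · rw [Set.indicator_of_mem (show (x, x') ∈ s from hd),
        Set.indicator_of_mem (show x' ∈ Metric.closedBall x (2 * T) from by
          rw [Metric.mem_closedBall, dist_comm]; exact hd)]
    · rw [Set.indicator_of_notMem (show (x, x') ∉ s from hd),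
        Set.indicator_of_notMem (show x' ∉ Metric.closedBall x (2 * T) from by
          rw [Metric.mem_closedBall, dist_comm]; exact hd)]
  rw [ENNReal.ofReal_inv_of_pos (hv T hT0), hRHS, lintegral_congr hinner]
  calc (∫⁻ x, ENNReal.ofReal (|f x - phiT Y T (PT μ T f) x| ^ p) ∂μ)
      ≤ ∫⁻ x, (ENNReal.ofReal (v T))⁻¹ *
          ∫⁻ x' in Metric.closedBall x (2 * T), ENNReal.ofReal (|f x - f x'| ^ p) ∂μ ∂μ :=
        lintegral_mono fun x =>
          pointwise_bound μ v V hv hgeom Y R hR hsep hcov p hp T hT f hf x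
    _ = (ENNReal.ofReal (v T))⁻¹ *
          ∫⁻ x, (∫⁻ x' in Metric.closedBall x (2 * T),
            ENNReal.ofReal (|f x - f x'| ^ p) ∂μ) ∂μ :=
        lintegral_const_mul' _ _ (ENNReal.inv_ne_top.2 (by
          simp only [ne_eq, ENNReal.ofReal_eq_zero, not_le]; exact hv T hT0))
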